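/- Let X ⊆ ℝⁿ be a nonempty compact set. Define Δ⁰ ∈ ℝⁿ by Δ⁰_k = min{ x_k : x ∈ X } for each k, let U = max{ Σ_{j=1}^{n} x_j : x ∈ X }, and for i = 1,…,n define Δⁱ ∈ ℝⁿ by Δⁱ_k = Δ⁰_k for k ≠ i and Δⁱ_i = U − Σ_{j≠i} Δ⁰_j. Then X is contained in the simplex conv{Δ⁰, Δ¹, …, Δⁿ}. -/

import Mathlib

/-- For nonempty compact `X ⊆ ℝⁿ`, with `Δ⁰_k = min{x_k : x ∈ X}`,
`U = max{Σ_j x_j : x ∈ X}` and `Δⁱ` agreeing with `Δ⁰` except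
`Δⁱ_i = U - Σ_{j ≠ i} Δ⁰_j`, the set `X` is contained in the simplex
`conv{Δ⁰, Δ¹, …, Δⁿ}`. -/
theorem stmt_19 {n : ℕ} (X : Set (Fin n → ℝ)) (hXne : X.Nonempty) (hXc : IsCompact X)
    (Δ0 : Fin n → ℝ) (hΔ0 : ∀ k, IsLeast ((fun x => x k) '' X) (Δ0 k))
    (U : ℝ) (hU : IsGreatest ((fun x => ∑ j, x j) '' X) U) :
    X ⊆ convexHull ℝ (insert Δ0 (Set.range fun i : Fin n =>
      Function.update Δ0 i (U - ∑ j ∈ Finset.univ.erase i, Δ0 j))) := by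
  intro x hx
  have hle : ∀ k, Δ0 k ≤ x k := fun k => (hΔ0 k).2 ⟨x, hx, rfl⟩
  have hxU : ∑ j, x j ≤ U := hU.2 ⟨x, hx, rfl⟩
  have hsum : ∑ j, Δ0 j ≤ ∑ j, x j := Finset.sum_le_sum fun j _ => hle j
  set D : ℝ := U - ∑ j, Δ0 j with hDdef
  have hD0 : 0 ≤ D := by simp only [hDdef, sub_nonneg]; linarith
  rcases eq_or_lt_of_le hD0 with hD | hD
  · -- D = 0 : x = Δ0
    have hxeq : x = Δ0 := by
      have h0 : ∑ j, (x j - Δ0 j) = 0 := by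
        have : ∑ j, (x j - Δ0 j) = ∑ j, x j - ∑ j, Δ0 j := Finset.sum_sub_distrib _ _
        rw [this]; linarith [hD.symm ▸ (rfl : D = D)]
      have := (Finset.sum_eq_zero_iff_of_nonneg fun j _ => sub_nonneg.2 (hle j)).1 h0
      funext k
      have := this k (Finset.mem_univ k)
      linarith
    rw [hxeq]
    exact subset_convexHull ℝ _ (Set.mem_insert _ _)
  · -- D > 0
    set t : Fin n → ℝ := fun i => (x i - Δ0 i) / D with htdef
    have ht0 : ∀ i, 0 ≤ t i := fun i => div_nonneg (sub_nonneg.2 (hle i)) hD0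
    have htsum : ∑ i, t i ≤ 1 := by
      rw [htdef]
      simp only
      rw [← Finset.sum_div, div_le_one hD, Finset.sum_sub_distrib]
      simp only [hDdef]; linarith
    set w : Option (Fin n) → ℝ := fun o => o.elim (1 - ∑ i, t i) t with hwdef
    set z : Option (Fin n) → (Fin n → ℝ) := fun o =>
      o.elim Δ0 (fun i => Function.update Δ0 i (U - ∑ j ∈ Finset.univ.erase i, Δ0 j)) with hzdef
    have hw0 : ∀ o ∈ Finset.univ, 0 ≤ w o := by
      rintro (_ | i) _
      · simpa [hwdef] using htsum
      · exact ht0 i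
    have hw1 : ∑ o, w o = 1 := by
      rw [Fintype.sum_option]
      simp [hwdef]
    have hz : ∀ o ∈ (Finset.univ : Finset (Option (Fin n))), z o ∈
        (insert Δ0 (Set.range fun i : Fin n =>
          Function.update Δ0 i (U - ∑ j ∈ Finset.univ.erase i, Δ0 j))) := by
      rintro (_ | i) _
      · exact Set.mem_insert _ _
      · exact Set.mem_insert_of_mem _ ⟨i, rfl⟩
    have hmem := Finset.centerMass_mem_convexHull (Finset.univ) hw0 (by rw [hw1]; norm_num) hz
    rw [Finset.centerMass_eq_of_sum_1 _ _ hw1] at hmem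
    have hxeq : ∑ o, w o • z o = x := by
      funext k
      rw [Finset.sum_apply]
      simp only [Pi.smul_apply, smul_eq_mul]
      rw [Fintype.sum_option]
      have hsplit : ∀ (a g : Fin n → ℝ), ∑ i, (if k = i then a i else g i)
          = a k + ∑ i ∈ Finset.univ.erase k, g i := by
        intro a g
        rw [← Finset.add_sum_erase _ _ (Finset.mem_univ k), if_pos rfl]
        congr 1
        refine Finset.sum_congr rfl fun i hi => ?_
        rw [if_neg fun h => (Finset.mem_erase.1 hi).1 h.symm]
      have : ∑ i, w (some i) * z (some i) k
          = t k * (U - ∑ j ∈ Finset.univ.erase k, Δ0 j)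
            + ∑ i ∈ Finset.univ.erase k, t i * Δ0 k := by
        have := hsplit (fun i => t i * (U - ∑ j ∈ Finset.univ.erase i, Δ0 j))
          (fun i => t i * Δ0 k)
        simp only [hwdef, hzdef, Option.elim, Function.update_apply] at *
        rw [← this]
        refine Finset.sum_congr rfl fun i _ => ?_
        by_cases h : k = i <;> simp [h]
      rw [this]
      have herase1 : ∑ j ∈ Finset.univ.erase k, Δ0 j = (∑ j, Δ0 j) - Δ0 k := by
        rw [← Finset.add_sum_erase _ _ (Finset.mem_univ k)]; ring
      have herase2 : ∑ i ∈ Finset.univ.erase k, t i * Δ0 k = ((∑ i, t i) - t k) * Δ0 k := by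
        rw [← Finset.sum_mul]
        congr 1
        rw [← Finset.add_sum_erase _ _ (Finset.mem_univ k)]; ring
      have htk : t k * D = x k - Δ0 k := by
        rw [htdef]; field_simp
      simp only [hwdef, hzdef, Option.elim]
      rw [herase1, herase2]
      have hUD : U = D + ∑ j, Δ0 j := by rw [hDdef]; ring
      rw [hUD]
      nlinarith [htk]
    rwa [hxeq] at hmem
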